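/- Define $R_1=\pi^2 s_1$ and $T_1=\pi s_2 s_1$ in the birational representation of $\widetilde W(A_2^{(1)})$ given by $s_i(a_j)=a_j a_i^{-a_{ij}}$, $s_i(f_j)=f_j\left(\frac{a_i+f_i}{1+a_i f_i}\right)^{u_{ij}}$, $\pi(a_i)=a_{i+1}$, $\pi(f_i)=f_{i+1}$. Then $R_1^2=T_1$ as birational transformations, and the action of $R_1$ is given explicitly by $R_1(a_0)=a_2a_0$, $R_1(a_1)=a_0^{-1}$, $R_1(a_2)=a_1a_0$, $R_1(f_1)=f_0$, and $R_1(f_0)=\frac{q c^2}{f_0 f_1}\cdot\frac{1+a_0 f_0}{a_0+f_0}$, where $q=a_0a_1a_2$ and $qc^2=f_0f_1f_2$. -/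

import Mathlib

/-- The Cartan matrix of type $A_2^{(1)}$: $a_{ii}=2$, $a_{ij}=-1$ for $i\neq j$. -/
def cartanA2 (i j : ZMod 3) : ℤ := if i = j then 2 else -1

/-- The orientation matrix $U$: $u_{01}=u_{12}=u_{20}=1$, skew-symmetric, $u_{ii}=0$. -/
def orientU (i j : ZMod 3) : ℤ := if j = i + 1 then 1 else if j = i - 1 then -1 else 0

/-- The transformation $s_i$ on the variables $(a;f)$:
$s_i(a_j)=a_j a_i^{-a_{ij}}$, $s_i(f_j)=f_j\left(\frac{a_i+f_i}{1+a_if_i}\right)^{u_{ij}}$. -/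
noncomputable def weylS {K : Type*} [Field K] (i : ZMod 3)
    (x : (ZMod 3 → K) × (ZMod 3 → K)) : (ZMod 3 → K) × (ZMod 3 → K) :=
  (fun j => x.1 j * x.1 i ^ (-(cartanA2 i j)),
   fun j => x.2 j * ((x.1 i + x.2 i) / (1 + x.1 i * x.2 i)) ^ (orientU i j))

/-- The diagram rotation $\pi$: $\pi(a_i)=a_{i+1}$, $\pi(f_i)=f_{i+1}$. -/
def weylPi {K : Type*} (x : (ZMod 3 → K) × (ZMod 3 → K)) :
    (ZMod 3 → K) × (ZMod 3 → K) :=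
  (fun j => x.1 (j + 1), fun j => x.2 (j + 1))

/-- The half-translation $R_1=\pi^2 s_1$ (acting on the variables from the right). -/
noncomputable def mapR1 {K : Type*} [Field K] (x : (ZMod 3 → K) × (ZMod 3 → K)) :
    (ZMod 3 → K) × (ZMod 3 → K) := weylS 1 (weylPi (weylPi x))

/-- The translation $T_1=\pi s_2 s_1$ (acting on the variables from the right). -/
noncomputable def mapT1 {K : Type*} [Field K] (x : (ZMod 3 → K) × (ZMod 3 → K)) :
    (ZMod 3 → K) × (ZMod 3 → K) := weylS 1 (weylS 2 (weylPi x))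

lemma shift {K : Type*} [Field K] (x : (ZMod 3 → K) × (ZMod 3 → K)) :
    weylPi (weylPi (weylS 1 (weylPi (weylPi x)))) = weylS 2 (weylPi x) := by
  refine Prod.ext (funext fun j => ?_) (funext fun j => ?_) <;>
    rcases (show j = 0 ∨ j = 1 ∨ j = 2 by revert j; decide) with rfl | rfl | rfl <;>
    simp (config := { decide := true }) [weylS, weylPi, cartanA2, orientU,
      show (1+1:ZMod 3)=2 from by decide, show (1+1+1:ZMod 3)=0 from by decide,
      show (1+1+1+1:ZMod 3)=1 from by decide, show (1+1+1+1+1:ZMod 3)=2 from by decide,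
      show (2+1:ZMod 3)=0 from by decide, show (2+1+1+1+1:ZMod 3)=0 from by decide,
      show (2-1:ZMod 3)=1 from by decide, show (2:ZMod 3)≠0 from by decide, show (2:ZMod 3)≠1 from by decide]

theorem stmt16 {K : Type*} [Field K] (a f a' f' : ZMod 3 → K)
    (ha : ∀ i, a i ≠ 0) (hf : ∀ i, f i ≠ 0)
    (h1 : ∀ i, a i + f i ≠ 0) (h2 : ∀ i, 1 + a i * f i ≠ 0)
    (hR : mapR1 (a, f) = (a', f'))
    (ha' : ∀ i, a' i ≠ 0) (h1' : ∀ i, a' i + f' i ≠ 0) (h2' : ∀ i, 1 + a' i * f' i ≠ 0) :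
    mapR1 (a', f') = mapT1 (a, f) ∧
    a' 0 = a 2 * a 0 ∧ a' 1 = (a 0)⁻¹ ∧ a' 2 = a 1 * a 0 ∧
    f' 1 = f 0 ∧
    f' 0 = (f 0 * f 1 * f 2) / (f 0 * f 1) * ((1 + a 0 * f 0) / (a 0 + f 0)) := by
  have hA := fun i => congrFun (congrArg Prod.fst hR) i
  have hF := fun i => congrFun (congrArg Prod.snd hR) i
  simp only [mapR1, weylS, weylPi, cartanA2, orientU] at hA hF
  have e0 : a' 0 = a 2 * a 0 := by
    have := (hA 0).symm
    simpa [show (0+1+1:ZMod 3)=2 from by decide, show (1+1+1:ZMod 3)=0 from by decide,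
      show (0:ZMod 3)≠1 from by decide, show (1+1:ZMod 3)=2 from by decide, show (2+1:ZMod 3)=0 from by decide] using this
  have e1 : a' 1 = (a 0)⁻¹ := by
    have := (hA 1).symm
    rw [this]
    simp only [show (1+1+1:ZMod 3)=0 from by decide, if_true, eq_self_iff_true]
    rw [show (-(2:ℤ)) = -1 + -1 from rfl, zpow_add₀ (ha 0), zpow_neg_one,
      ← mul_assoc, mul_inv_cancel₀ (ha 0), one_mul]
  have e2 : a' 2 = a 1 * a 0 := by
    have := (hA 2).symm
    simpa [show (2+1+1:ZMod 3)=1 from by decide, show (1+1+1:ZMod 3)=0 from by decide,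
      show (2:ZMod 3)≠1 from by decide, show (1:ZMod 3)≠2 from by decide] using this
  have e4 : f' 1 = f 0 := by
    have := (hF 1).symm
    simpa [show (1+1+1:ZMod 3)=0 from by decide, show (1:ZMod 3)≠2 from by decide,
      show (1-1:ZMod 3)=0 from by decide, show (1:ZMod 3)≠0 from by decide] using this
  have e5 : f' 0 = f 2 * ((1 + a 0 * f 0) / (a 0 + f 0)) := by
    have := (hF 0).symm
    simpa [show (0+1+1:ZMod 3)=2 from by decide, show (1+1+1:ZMod 3)=0 from by decide,
      show (0:ZMod 3)≠2 from by decide, show (1-1:ZMod 3)=0 from by decide,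
      show (1+1:ZMod 3)=2 from by decide, show (2+1:ZMod 3)=0 from by decide] using this
  refine ⟨?_, e0, e1, e2, e4, ?_⟩
  · have : (a', f') = mapR1 (a, f) := hR.symm
    rw [mapR1, this, mapR1, shift, ← mapT1]
  · rw [e5, mul_div_cancel_left₀ (f 2) (mul_ne_zero (hf 0) (hf 1))]
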